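/- With α₁, α₂ as above and φ(u) = u + f(u)/(b u(α₁-α₂) - d_u) (defined where the denominator is nonzero), a point (u₁, v₁, u₂, v₂) with b u₁(α₁-α₂) ≠ d_u and b u₂(α₁-α₂) ≠ d_u is an equilibrium of the 2×2 coupled system if and only if u₂ = φ(u₁), u₁ = φ(u₂), v₁ = α₁u₁ + α₂u₂, v₂ = α₁u₂ + α₂u₁; in particular u₁ is then a fixed point of φ∘φ. -/

import Mathlib

/-- With `α₁ = c(d_v+e)/(e(e+2d_v))`, `α₂ = c d_v/(e(e+2d_v))` and
`φ u = u + f(u)/(b u (α₁-α₂) - d_u)`, a point `(u₁,v₁,u₂,v₂)` with nonvanishing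
denominators is an equilibrium of the 2×2 coupled system iff `u₂ = φ u₁`,
`u₁ = φ u₂`, `v₁ = α₁u₁ + α₂u₂`, `v₂ = α₁u₂ + α₂u₁`; in particular `u₁` is then
a fixed point of `φ ∘ φ`. -/
theorem stmt_12 (a b c e du dv γ : ℝ) (ha : 0 < a) (hb : 0 < b) (hc : 0 < c)
    (he : 0 < e) (hdu : 0 < du) (hdv : 0 < dv)
    (f φ : ℝ → ℝ) (α₁ α₂ : ℝ)
    (hf : ∀ x, f x = a * x * (1 - x) * (x - γ))
    (hα₁ : α₁ = c * (dv + e) / (e * (e + 2 * dv)))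
    (hα₂ : α₂ = c * dv / (e * (e + 2 * dv)))
    (hφ : ∀ x, φ x = x + f x / (b * x * (α₁ - α₂) - du))
    (u₁ v₁ u₂ v₂ : ℝ)
    (hden₁ : b * u₁ * (α₁ - α₂) ≠ du) (hden₂ : b * u₂ * (α₁ - α₂) ≠ du) :
    ((f u₁ - b * u₁ * (v₂ - v₁) + du * (u₂ - u₁) = 0 ∧
      c * u₁ - e * v₁ + dv * (v₂ - v₁) = 0 ∧
      f u₂ - b * u₂ * (v₁ - v₂) + du * (u₁ - u₂) = 0 ∧
      c * u₂ - e * v₂ + dv * (v₁ - v₂) = 0) ↔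
     (u₂ = φ u₁ ∧ u₁ = φ u₂ ∧
      v₁ = α₁ * u₁ + α₂ * u₂ ∧ v₂ = α₁ * u₂ + α₂ * u₁)) ∧
    ((f u₁ - b * u₁ * (v₂ - v₁) + du * (u₂ - u₁) = 0 ∧
      c * u₁ - e * v₁ + dv * (v₂ - v₁) = 0 ∧
      f u₂ - b * u₂ * (v₁ - v₂) + du * (u₁ - u₂) = 0 ∧
      c * u₂ - e * v₂ + dv * (v₁ - v₂) = 0) → u₁ = φ (φ u₁)) := by
  have hD : e * (e + 2 * dv) ≠ 0 := by positivity
  have h1 : b * u₁ * (α₁ - α₂) - du ≠ 0 := sub_ne_zero.mpr hden₁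
  have h2 : b * u₂ * (α₁ - α₂) - du ≠ 0 := sub_ne_zero.mpr hden₂
  have key : (f u₁ - b * u₁ * (v₂ - v₁) + du * (u₂ - u₁) = 0 ∧
      c * u₁ - e * v₁ + dv * (v₂ - v₁) = 0 ∧
      f u₂ - b * u₂ * (v₁ - v₂) + du * (u₁ - u₂) = 0 ∧
      c * u₂ - e * v₂ + dv * (v₁ - v₂) = 0) ↔
     (u₂ = φ u₁ ∧ u₁ = φ u₂ ∧
      v₁ = α₁ * u₁ + α₂ * u₂ ∧ v₂ = α₁ * u₂ + α₂ * u₁) := by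
    constructor
    · rintro ⟨e1, e2, e3, e4⟩
      have hv₁ : v₁ = α₁ * u₁ + α₂ * u₂ := by
        rw [hα₁, hα₂]
        field_simp
        linear_combination (-(e + dv)) * e2 + (-dv) * e4
      have hv₂ : v₂ = α₁ * u₂ + α₂ * u₁ := by
        rw [hα₁, hα₂]
        field_simp
        linear_combination (-dv) * e2 + (-(e + dv)) * e4
      subst hv₁ hv₂
      refine ⟨?_, ?_, rfl, rfl⟩
      · rw [hφ]
        rw [eq_comm, add_div' _ _ _ h1, div_eq_iff h1]
        linear_combination e1
      · rw [hφ]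
        rw [eq_comm, add_div' _ _ _ h2, div_eq_iff h2]
        linear_combination e3
    · rintro ⟨hu₂, hu₁, hv₁, hv₂⟩
      subst hv₁ hv₂
      refine ⟨?_, ?_, ?_, ?_⟩
      · rw [hφ] at hu₂
        rw [hu₂]
        field_simp
        ring
      · rw [hα₁, hα₂]; field_simp; ring
      · rw [hφ] at hu₁
        rw [hu₁]
        field_simp
        ring
      · rw [hα₁, hα₂]; field_simp; ring
  refine ⟨key, fun h => ?_⟩
  obtain ⟨h2', h1', -, -⟩ := key.mp h
  exact h1'.trans (congrArg φ h2')
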